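/- Fix δ ∈ (0,1/3] and integers 0 ≤ k ≤ n with 2δn ≤ k ≤ (2/3)n. Let μ and K(n,k) be as in the triadic construction, and let 𝒦^d(n,k) be the collection of triadic cubes of side length 3^{−n} whose union is the d-fold Cartesian product K(n,k)^d. Then the number of cubes satisfies #𝒦^d(n,k) ≤ e^{kd[1 + log(1/δ)]}. -/

import Mathlib

open MeasureTheory Set

noncomputable section

/-- The number of ternary (base-3) digits of `i` equal to `1`. -/
def ternaryOnes (i : ℕ) : ℕ := (Nat.digits 3 i).count 1

/-- The triadic mass assignment determining the measure `μ`. -/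
def ternarySpec (δ : ℝ) (μ : Measure ℝ) : Prop :=
  ∀ (j : ℤ) (n i : ℕ), i < 3 ^ n →
    μ (Set.Ico ((j : ℝ) + (i : ℝ) / 3 ^ n) ((j : ℝ) + ((i : ℝ) + 1) / 3 ^ n)) =
      ENNReal.ofReal (δ ^ (n - ternaryOnes i) * (1 - 2 * δ) ^ ternaryOnes i)

/-- The triadic interval `[i·3⁻ⁿ, (i+1)·3⁻ⁿ) ⊆ [0,1)` of generation `n`, `0 ≤ i < 3 ^ n`. -/
def triIco (n i : ℕ) : Set ℝ := Set.Ico ((i : ℝ) / 3 ^ n) (((i : ℝ) + 1) / 3 ^ n)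

/-- Indices `0 ≤ i < 3 ^ n` of the "heavy" triadic intervals of generation `n` inside `[0,1)`,
those with `μ(I) ≥ δ ^ k · (1 - 2δ) ^ (n - k)`. -/
def goodIdx (δ : ℝ) (μ : Measure ℝ) (n k : ℕ) : Set ℕ :=
  {i | i < 3 ^ n ∧ ENNReal.ofReal (δ ^ k * (1 - 2 * δ) ^ (n - k)) ≤ μ (triIco n i)}

/-- `K(n,k)`: the union of the triadic intervals `I ⊆ [0,1)` of generation `n` with
`μ(I) ≥ δ ^ k · (1 - 2δ) ^ (n - k)`. -/
def Kset (δ : ℝ) (μ : Measure ℝ) (n k : ℕ) : Set ℝ := ⋃ i ∈ goodIdx δ μ n k, triIco n i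

/-- `𝒦^d(n,k)`: the collection of triadic cubes of side `3⁻ⁿ` whose union is `K(n,k)^d`. -/
def cubesNK (d : ℕ) (δ : ℝ) (μ : Measure ℝ) (n k : ℕ) : Set (Set (Fin d → ℝ)) :=
  {Q | ∃ f : Fin d → ℕ, (∀ j, f j ∈ goodIdx δ μ n k) ∧
    Q = Set.pi Set.univ fun j => triIco n (f j)}

lemma ternaryOnes_step (a b : ℕ) (hb : b < 3) :
    ternaryOnes (b + 3 * a) = (if b = 1 then 1 else 0) + ternaryOnes a := by
  rcases Nat.eq_zero_or_pos (b + 3 * a) with h | h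
  · have hb0 : b = 0 := by omega
    have ha0 : a = 0 := by omega
    subst hb0; subst ha0; simp [ternaryOnes]
  · unfold ternaryOnes
    rw [Nat.digits_def' (by norm_num : (1:ℕ) < 3) h]
    have h1 : (b + 3 * a) % 3 = b := by omega
    have h2 : (b + 3 * a) / 3 = a := by omega
    rw [h1, h2, List.count_cons]
    interval_cases b <;> simp <;> omega

lemma ternaryOnes_le {n i : ℕ} (h : i < 3 ^ n) : ternaryOnes i ≤ n := by
  induction n generalizing i with
  | zero => interval_cases i; simp [ternaryOnes]
  | succ n ih =>
    have : i = i % 3 + 3 * (i / 3) := by omega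
    rw [this, ternaryOnes_step _ _ (Nat.mod_lt _ (by norm_num))]
    have : i / 3 < 3 ^ n := by
      have : (3:ℕ) ^ (n+1) = 3 * 3 ^ n := by ring
      omega
    have := ih this
    split <;> omega

lemma sum_pow_ternaryOnes (t : ℝ) (n : ℕ) :
    ∑ i ∈ Finset.range (3 ^ n), t ^ ternaryOnes i = (2 + t) ^ n := by
  induction n with
  | zero => simp [ternaryOnes]
  | succ n ih =>
    have key : ∑ i ∈ Finset.range (3 ^ (n+1)), t ^ ternaryOnes i
        = ∑ p ∈ Finset.range 3 ×ˢ Finset.range (3 ^ n), t ^ ternaryOnes (p.1 + 3 * p.2) := by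
      refine Finset.sum_nbij' (fun i => (i % 3, i / 3)) (fun p => p.1 + 3 * p.2) ?_ ?_ ?_ ?_ ?_
      · intro i hi
        simp only [Finset.mem_range, Finset.mem_product] at *
        have : (3:ℕ) ^ (n+1) = 3 * 3 ^ n := by ring
        constructor
        · omega
        · omega
      · intro p hp
        simp only [Finset.mem_range, Finset.mem_product] at *
        have : (3:ℕ) ^ (n+1) = 3 * 3 ^ n := by ring
        omega
      · intro i _; dsimp only; omega
      · intro p hp
        simp only [Finset.mem_range, Finset.mem_product] at hp
        ext <;> dsimp <;> omega
      · intro i hi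
        dsimp only
        have h : i % 3 + 3 * (i / 3) = i := by omega
        rw [h]
    rw [key, Finset.sum_product]
    have : ∀ b ∈ Finset.range 3, ∑ a ∈ Finset.range (3 ^ n), t ^ ternaryOnes (b + 3 * a)
        = (if b = 1 then t else 1) * (2 + t) ^ n := by
      intro b hb
      simp only [Finset.mem_range] at hb
      rw [← ih, Finset.mul_sum]
      refine Finset.sum_congr rfl fun a _ => ?_
      rw [ternaryOnes_step a b hb]
      split <;> simp [pow_add, pow_succ, mul_comm]
    rw [Finset.sum_congr rfl this]
    rw [Finset.sum_range_succ, Finset.sum_range_succ, Finset.sum_range_one]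
    norm_num; ring

lemma goodIdx_finite (δ : ℝ) (μ : Measure ℝ) (n k : ℕ) : (goodIdx δ μ n k).Finite :=
  Set.Finite.subset (Finset.range (3 ^ n)).finite_toSet
    (fun i hi => Finset.mem_coe.mpr (Finset.mem_range.mpr hi.1))

lemma ncard_goodIdx_le (δ : ℝ) (hδ0 : 0 < δ) (hδ : δ ≤ 1 / 3)
    (μ : Measure ℝ) (hμ : ternarySpec δ μ) (n k : ℕ)
    (hk1 : 2 * δ * n ≤ (k : ℝ)) (hk2 : (k : ℝ) ≤ 2 / 3 * n) :
    ((goodIdx δ μ n k).ncard : ℝ) ≤ Real.exp ((k : ℝ) * (1 + Real.log (1 / δ))) := by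
  classical
  have h2δ : 0 < 1 - 2 * δ := by linarith
  have hLpos : 0 ≤ 1 + Real.log (1 / δ) := by
    have : (1:ℝ) ≤ 1 / δ := by
      rw [le_div_iff₀ hδ0]; linarith
    have := Real.log_nonneg this
    linarith
  -- measure of a triadic interval
  have hμi : ∀ i < 3 ^ n, μ (triIco n i) =
      ENNReal.ofReal (δ ^ (n - ternaryOnes i) * (1 - 2 * δ) ^ ternaryOnes i) := by
    intro i hi
    have := hμ 0 n i hi
    simpa [triIco] using this
  -- real form of the goodness condition
  have hgood : ∀ i ∈ goodIdx δ μ n k,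
      δ ^ k * (1 - 2 * δ) ^ (n - k) ≤ δ ^ (n - ternaryOnes i) * (1 - 2 * δ) ^ ternaryOnes i := by
    intro i hi
    have h1 := hi.2
    rw [hμi i hi.1] at h1
    exact (ENNReal.ofReal_le_ofReal_iff (by positivity)).mp h1
  rcases Nat.eq_zero_or_pos n with hn | hn
  · -- degenerate case n = 0 : at most one index
    have hsub : goodIdx δ μ n k ⊆ {0} := by
      intro i hi
      have := hi.1
      simp only [hn, pow_zero, Nat.lt_one_iff] at this
      simp [this]
    have := Set.ncard_le_ncard hsub (Set.finite_singleton 0)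
    have h1 : ((goodIdx δ μ n k).ncard : ℝ) ≤ 1 := by
      simpa using (Nat.cast_le.mpr this : ((goodIdx δ μ n k).ncard : ℝ) ≤ _)
    calc ((goodIdx δ μ n k).ncard : ℝ) ≤ 1 := h1
      _ ≤ Real.exp ((k : ℝ) * (1 + Real.log (1 / δ))) := by
          exact Real.one_le_exp (mul_nonneg (Nat.cast_nonneg k) hLpos)
  · -- main case n ≥ 1
    have hNpos : (0:ℝ) < (n:ℝ) := by exact_mod_cast hn
    have hk0 : 1 ≤ k := by
      rcases Nat.eq_zero_or_pos k with h | h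
      · exfalso
        rw [h] at hk1
        push_cast at hk1
        nlinarith
      · exact h
    have h3k : 3 * k ≤ 2 * n := by
      have : ((3 * k : ℕ) : ℝ) ≤ ((2 * n : ℕ) : ℝ) := by push_cast; linarith
      exact_mod_cast this
    have hkn : k < n := by omega
    set K : ℝ := (k : ℝ) with hK
    set N : ℝ := (n : ℝ) with hN
    have hKpos : 0 < K := by rw [hK]; exact_mod_cast Nat.pos_of_ne_zero (by omega)
    have hNKpos : 0 < N - K := by
      have : (k:ℝ) < n := by exact_mod_cast hkn
      linarith
    have hNKcast : ((n - k : ℕ) : ℝ) = N - K := by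
      push_cast [Nat.cast_sub hkn.le]; ring
    set t : ℝ := 2 * (N - K) / K with htdef
    have ht0 : 0 < t := by positivity
    have ht1 : 1 ≤ t := by
      rw [le_div_iff₀ hKpos]
      have h33 : (3:ℝ) * K ≤ 2 * N := by
        rw [hK, hN]; exact_mod_cast h3k
      linarith
    set G : Finset ℕ := (Finset.range (3 ^ n)).filter (fun i => n - k ≤ ternaryOnes i) with hG
    -- Step 1: count * t^(n-k) ≤ (2+t)^n
    have step1 : ((goodIdx δ μ n k).ncard : ℝ) * t ^ (n - k) ≤ (2 + t) ^ n := by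
      by_cases hδ3 : δ < 1 / 3
      · -- good indices have many ones
        have hsub : goodIdx δ μ n k ⊆ ↑G := by
          intro i hi
          have hin := hi.1
          have hle := hgood i hi
          have hm : ternaryOnes i ≤ n := ternaryOnes_le hin
          simp only [hG, Finset.coe_filter, Set.mem_setOf_eq, Finset.mem_range]
          refine ⟨hin, ?_⟩
          by_contra hc
          push_neg at hc
          set m := ternaryOnes i
          have hj : 1 ≤ n - k - m := by omega
          set j := n - k - m with hjdef
          have e1 : n - m = k + j := by omega
          have e2 : n - k = m + j := by omega
          rw [e1, e2, pow_add, pow_add] at hle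
          -- δ^k * ((1-2δ)^m * (1-2δ)^j) ≤ δ^k * δ^j * (1-2δ)^m
          have hcancel : (1 - 2*δ) ^ j ≤ δ ^ j := by
            have hpos : 0 < δ ^ k * (1 - 2*δ) ^ m := by positivity
            nlinarith [pow_pos hδ0 k, pow_pos h2δ m, pow_pos hδ0 j, pow_pos h2δ j,
              mul_pos (pow_pos hδ0 k) (pow_pos h2δ m)]
          have : 1 - 2*δ ≤ δ :=
            le_of_pow_le_pow_left₀ (by omega) hδ0.le hcancel
          linarith
        have hcard : ((goodIdx δ μ n k).ncard : ℝ) ≤ (G.card : ℝ) := by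
          have := Set.ncard_le_ncard hsub G.finite_toSet
          rw [Set.ncard_coe_finset] at this
          exact_mod_cast this
        have hsum1 : (G.card : ℝ) * t ^ (n - k) ≤ ∑ i ∈ G, t ^ ternaryOnes i := by
          calc (G.card : ℝ) * t ^ (n - k) = ∑ _i ∈ G, t ^ (n - k) := by
                rw [Finset.sum_const, nsmul_eq_mul]
            _ ≤ ∑ i ∈ G, t ^ ternaryOnes i := by
                refine Finset.sum_le_sum fun i hi => ?_
                exact pow_le_pow_right₀ ht1 (Finset.mem_filter.mp hi).2
        calc ((goodIdx δ μ n k).ncard : ℝ) * t ^ (n - k)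
            ≤ (G.card : ℝ) * t ^ (n - k) :=
              mul_le_mul_of_nonneg_right hcard (by positivity)
          _ ≤ ∑ i ∈ G, t ^ ternaryOnes i := hsum1
          _ ≤ ∑ i ∈ Finset.range (3 ^ n), t ^ ternaryOnes i :=
              Finset.sum_le_sum_of_subset_of_nonneg (Finset.filter_subset _ _)
                (fun i _ _ => by positivity)
          _ = (2 + t) ^ n := sum_pow_ternaryOnes t n
      · -- δ = 1/3 : t = 1 and we use the trivial bound 3^n
        have hδeq : δ = 1 / 3 := le_antisymm hδ (not_lt.mp hδ3)
        have h2N : 2 * N = 3 * K := by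
          have h1 : 2 / 3 * N ≤ K := by rw [hδeq] at hk1; linarith
          have h2 : K ≤ 2 / 3 * N := hk2
          linarith
        have ht : t = 1 := by
          rw [htdef]; rw [div_eq_one_iff_eq hKpos.ne']; linarith
        rw [ht, one_pow, mul_one]
        have hsub : goodIdx δ μ n k ⊆ ↑(Finset.range (3 ^ n)) := by
          intro i hi; simpa using hi.1
        have := Set.ncard_le_ncard hsub (Finset.range (3 ^ n)).finite_toSet
        rw [Set.ncard_coe_finset, Finset.card_range] at this
        calc ((goodIdx δ μ n k).ncard : ℝ) ≤ ((3 ^ n : ℕ) : ℝ) := by exact_mod_cast this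
          _ = (2 + 1) ^ n := by norm_num
    -- Step 2: (2+t)^n ≤ exp K * (1/δ)^k * t^(n-k)
    have step2 : (2 + t) ^ n ≤ Real.exp K * (1 / δ) ^ k * t ^ (n - k) := by
      have h2t : 2 + t = 2 * N / K := by
        rw [htdef]; field_simp; ring
      have hfac : 2 * N / K = N / (N - K) * t := by
        rw [htdef]; field_simp
      have hpowsplit : (2 * N / K) ^ n = (2 * N / K) ^ k * ((N / (N - K)) ^ (n - k) * t ^ (n - k)) := by
        rw [← mul_pow, ← hfac, ← pow_add]
        congr 1
        omega
      rw [h2t, hpowsplit]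
      have hb1 : (2 * N / K) ^ k ≤ (1 / δ) ^ k := by
        refine pow_le_pow_left₀ (by positivity) ?_ k
        rw [div_le_div_iff₀ hKpos hδ0]
        nlinarith
      have hb2 : (N / (N - K)) ^ (n - k) ≤ Real.exp K := by
        have h1 : N / (N - K) = 1 + K / (N - K) := by field_simp; ring
        have h2 : 1 + K / (N - K) ≤ Real.exp (K / (N - K)) := by
          linarith [Real.add_one_le_exp (K / (N - K))]
        calc (N / (N - K)) ^ (n - k) ≤ Real.exp (K / (N - K)) ^ (n - k) := by
              refine pow_le_pow_left₀ (by positivity) ?_ _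
              rw [h1]; exact h2
          _ = Real.exp (((n - k : ℕ) : ℝ) * (K / (N - K))) := (Real.exp_nat_mul _ _).symm
          _ = Real.exp K := by
              rw [hNKcast]
              congr 1
              field_simp
      calc (2 * N / K) ^ k * ((N / (N - K)) ^ (n - k) * t ^ (n - k))
          ≤ (1 / δ) ^ k * (Real.exp K * t ^ (n - k)) := by
            refine mul_le_mul hb1 ?_ (by positivity) (by positivity)
            exact mul_le_mul_of_nonneg_right hb2 (by positivity)
        _ = Real.exp K * (1 / δ) ^ k * t ^ (n - k) := by ring
    -- combine
    have hmain : ((goodIdx δ μ n k).ncard : ℝ) ≤ Real.exp K * (1 / δ) ^ k :=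
      le_of_mul_le_mul_right (step1.trans step2) (pow_pos ht0 _)
    calc ((goodIdx δ μ n k).ncard : ℝ) ≤ Real.exp K * (1 / δ) ^ k := hmain
      _ = Real.exp (K * (1 + Real.log (1 / δ))) := by
          rw [mul_add, mul_one, Real.exp_add]
          congr 1
          rw [Real.exp_nat_mul, Real.exp_log (by positivity)]

/-- If `2δn ≤ k ≤ (2/3)n` then `#𝒦^d(n,k) ≤ exp(kd(1 + log(1/δ)))`. -/
theorem card_cubesNK_le (d : ℕ) (hd : 2 ≤ d) (δ : ℝ) (hδ0 : 0 < δ) (hδ : δ ≤ 1 / 3)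
    (μ : Measure ℝ) (hμ : ternarySpec δ μ) (n k : ℕ)
    (hk1 : 2 * δ * n ≤ (k : ℝ)) (hk2 : (k : ℝ) ≤ 2 / 3 * n) :
    ((cubesNK d δ μ n k).ncard : ℝ) ≤
      Real.exp ((k : ℝ) * d * (1 + Real.log (1 / δ))) := by
  classical
  set S := goodIdx δ μ n k with hS
  have hfin : S.Finite := goodIdx_finite δ μ n k
  set G : Finset ℕ := hfin.toFinset with hG
  -- the cubes are covered by the image of the finite set of index functions
  have hcover : cubesNK d δ μ n k ⊆
      ↑((Fintype.piFinset (fun _ : Fin d => G)).image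
        (fun f => Set.pi Set.univ fun j => triIco n (f j))) := by
    rintro Q ⟨f, hf, rfl⟩
    simp only [Finset.coe_image, Set.mem_image, Finset.mem_coe]
    refine ⟨f, ?_, rfl⟩
    rw [Fintype.mem_piFinset]
    intro j
    exact hfin.mem_toFinset.mpr (hf j)
  have h1 : (cubesNK d δ μ n k).ncard ≤ S.ncard ^ d := by
    have h2 := Set.ncard_le_ncard hcover (Finset.finite_toSet _)
    rw [Set.ncard_coe_finset] at h2
    refine h2.trans ?_
    refine (Finset.card_image_le).trans ?_
    rw [Fintype.card_piFinset]
    simp only [Finset.prod_const, Finset.card_univ, Fintype.card_fin]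
    have : G.card = S.ncard := by rw [Set.ncard_eq_toFinset_card S hfin]
    exact le_of_eq (by rw [this])
  have hSbound : ((S.ncard : ℝ)) ≤ Real.exp ((k : ℝ) * (1 + Real.log (1 / δ))) :=
    ncard_goodIdx_le δ hδ0 hδ μ hμ n k hk1 hk2
  calc ((cubesNK d δ μ n k).ncard : ℝ) ≤ ((S.ncard ^ d : ℕ) : ℝ) := by exact_mod_cast h1
    _ = ((S.ncard : ℝ)) ^ d := by push_cast; ring
    _ ≤ (Real.exp ((k : ℝ) * (1 + Real.log (1 / δ)))) ^ d :=
        pow_le_pow_left₀ (Nat.cast_nonneg _) hSbound d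
    _ = Real.exp ((k : ℝ) * d * (1 + Real.log (1 / δ))) := by
        rw [← Real.exp_nat_mul]
        congr 1
        ring
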